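/- For any minibatch-SAGA state, E_B[φ2⁺] − φ2 ≤ −(1 − e^{−m/n})·φ2 + 4·m·η²·L·⟨y, ∇f(x)⟩, where φ2⁺ denotes the value of φ2 at the state produced by one step with batch B. -/

import Mathlib

open Finset
open scoped RealInnerProductSpace BigOperators

noncomputable section

/-- The state of minibatch SAGA: the iterate `x` and the last gradients `α_i`. -/
structure MbState (d n : ℕ) where
  x : EuclideanSpace ℝ (Fin d)
  alpha : Fin n → EuclideanSpace ℝ (Fin d)

namespace MbState

variable {d n : ℕ}

/-- `ᾱ = (1/n) ∑ i, α_i`. -/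
def abar (S : MbState d n) : EuclideanSpace ℝ (Fin d) :=
  ((1 : ℝ) / n) • ∑ i, S.alpha i

/-- One step of minibatch SAGA with batch `B = (i_1, …, i_m)` (one index per machine). -/
def step {m : ℕ} (gradf : Fin n → EuclideanSpace ℝ (Fin d) → EuclideanSpace ℝ (Fin d))
    (η : ℝ) (S : MbState d n) (B : Fin m → Fin n) : MbState d n where
  x := S.x - η • ((∑ j, gradf (B j) S.x) - (∑ j, S.alpha (B j)) + (m : ℝ) • S.abar)
  alpha := fun i => if ∃ j, B j = i then gradf i S.x else S.alpha i

/-- Run `k` steps of minibatch SAGA, with batches given by `ω`. -/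
def run {m : ℕ} (gradf : Fin n → EuclideanSpace ℝ (Fin d) → EuclideanSpace ℝ (Fin d))
    (η : ℝ) (S0 : MbState d n) : (k : ℕ) → (Fin k → (Fin m → Fin n)) → MbState d n
  | 0, _ => S0
  | (k + 1), ω => step gradf η (run gradf η S0 k (fun t => ω t.castSucc)) (ω (Fin.last k))

end MbState

/-- The probability of a batch `B`, when each `i_j` is drawn independently and uniformly from
`S_j = J⁻¹(j)` (each of size `n/m`): it is `(m/n)^m` if `B j ∈ S_j` for all `j`, and `0`
otherwise. -/
def mbWeight {n m : ℕ} (J : Fin n → Fin m) (B : Fin m → Fin n) : ℝ :=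
  ∏ j, if J (B j) = j then (m : ℝ) / n else 0

end

section Aux
variable {E : Type*} [NormedAddCommGroup E] [InnerProductSpace ℝ E] [CompleteSpace E]

lemma line_hasDerivAt (f : E → ℝ) (g : E → E) (hg : ∀ z, HasGradientAt f (g z) z)
    (a v : E) (t : ℝ) :
    HasDerivAt (fun s : ℝ => f (a + s • v)) ⟪g (a + t • v), v⟫ t := by
  have h1 : HasDerivAt (fun s : ℝ => a + s • v) v t := by
    simpa using ((hasDerivAt_id t).smul_const v).const_add a
  have h2 := (hasGradientAt_iff_hasFDerivAt.mp (hg (a + t • v))).comp_hasDerivAt t h1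
  simp at h2
  exact h2

lemma convex_grad_ineq (f : E → ℝ) (g : E → E) (hg : ∀ z, HasGradientAt f (g z) z)
    (hc : ConvexOn ℝ Set.univ f) (x y : E) :
    f x + ⟪g x, y - x⟫ ≤ f y := by
  have hψ : ConvexOn ℝ Set.univ (fun t : ℝ => f (x + t • (y - x))) := by
    have h := hc.comp_affineMap (AffineMap.lineMap x y)
    have he : (fun t : ℝ => f (x + t • (y - x))) = f ∘ (AffineMap.lineMap x y) := by
      funext t
      simp only [Function.comp_apply, AffineMap.lineMap_apply_module]
      congr 1
      module
    rw [he]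
    simpa using h
  have hd : HasDerivAt (fun t : ℝ => f (x + t • (y - x))) ⟪g x, y - x⟫ 0 := by
    simpa using line_hasDerivAt f g hg x (y - x) 0
  have := hψ.le_slope_of_hasDerivAt (Set.mem_univ (0:ℝ)) (Set.mem_univ (1:ℝ)) one_pos hd
  simp only [slope_def_field] at this
  simp only [zero_smul, add_zero, one_smul, add_sub_cancel, sub_zero, div_one] at this
  linarith [this]

lemma descent_lemma (f : E → ℝ) (g : E → E) (hg : ∀ z, HasGradientAt f (g z) z)
    {L : ℝ} (hL : 0 < L) (hlip : ∀ x y : E, ‖g x - g y‖ ≤ L * ‖x - y‖) (x y : E) :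
    f y ≤ f x + ⟪g x, y - x⟫ + L / 2 * ‖y - x‖ ^ 2 := by
  set v := y - x with hv
  set φ : ℝ → ℝ := fun t => f (x + t • v) - t * ⟪g x, v⟫ - L * t ^ 2 / 2 * ‖v‖ ^ 2 with hφ
  have hder : ∀ t : ℝ, HasDerivAt φ (⟪g (x + t • v), v⟫ - ⟪g x, v⟫ - L * t * ‖v‖ ^ 2) t := by
    intro t
    have h1 := line_hasDerivAt f g hg x v t
    have h2 : HasDerivAt (fun t : ℝ => t * ⟪g x, v⟫) ⟪g x, v⟫ t := by
      simpa using (hasDerivAt_id t).mul_const ⟪g x, v⟫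
    have h3 : HasDerivAt (fun t : ℝ => L * t ^ 2 / 2 * ‖v‖ ^ 2) (L * t * ‖v‖ ^ 2) t := by
      have : HasDerivAt (fun t : ℝ => t ^ 2) (2 * t) t := by
        simpa using hasDerivAt_pow 2 t
      have := ((this.const_mul L).div_const 2).mul_const (‖v‖ ^ 2)
      rw [show L * t * ‖v‖ ^ 2 = L * (2 * t) / 2 * ‖v‖ ^ 2 by ring]
      exact this
    have h4 := (h1.sub h2).sub h3
    exact h4
  have hanti : AntitoneOn φ (Set.Icc (0:ℝ) 1) := by
    apply antitoneOn_of_deriv_nonpos (convex_Icc 0 1)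
    · exact fun t _ => ((hder t).continuousAt).continuousWithinAt
    · exact fun t _ => ((hder t).differentiableAt).differentiableWithinAt
    · intro t ht
      rw [interior_Icc] at ht
      rw [(hder t).deriv]
      have h4 : ⟪g (x + t • v) - g x, v⟫ ≤ L * t * ‖v‖ ^ 2 := by
        calc ⟪g (x + t • v) - g x, v⟫ ≤ ‖g (x + t • v) - g x‖ * ‖v‖ :=
              real_inner_le_norm _ _
          _ ≤ (L * ‖(x + t • v) - x‖) * ‖v‖ := by
              have := hlip (x + t • v) x
              nlinarith [norm_nonneg v]
          _ = L * t * ‖v‖ ^ 2 := by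
              rw [add_sub_cancel_left, norm_smul]
              simp [abs_of_nonneg (le_of_lt ht.1)]; ring
      rw [inner_sub_left] at h4
      linarith
  have h01 := hanti (Set.mem_Icc.mpr ⟨le_refl 0, zero_le_one⟩)
    (Set.mem_Icc.mpr ⟨zero_le_one, le_refl 1⟩) zero_le_one
  have e0 : φ 0 = f x := by simp [hφ]
  have e1 : φ 1 = f y - ⟪g x, v⟫ - L / 2 * ‖v‖ ^ 2 := by
    simp [hφ, hv]
  rw [e0, e1] at h01
  linarith

lemma lower_quad (f : E → ℝ) (g : E → E) (hg : ∀ z, HasGradientAt f (g z) z)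
    (hc : ConvexOn ℝ Set.univ f)
    {L : ℝ} (hL : 0 < L) (hlip : ∀ x y : E, ‖g x - g y‖ ≤ L * ‖x - y‖) (x y : E) :
    f x + ⟪g x, y - x⟫ + 1 / (2 * L) * ‖g y - g x‖ ^ 2 ≤ f y := by
  set d := g y - g x with hd
  set z := y - (1 / L) • d with hz
  have h1 : f x + ⟪g x, z - x⟫ ≤ f z := convex_grad_ineq f g hg hc x z
  have h2 : f z ≤ f y + ⟪g y, z - y⟫ + L / 2 * ‖z - y‖ ^ 2 :=
    descent_lemma f g hg hL hlip y z
  have e1 : ⟪g x, z - x⟫ = ⟪g x, y - x⟫ - (1 / L) * ⟪g x, d⟫ := by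
    rw [hz]
    rw [show y - (1 / L) • d - x = (y - x) - (1 / L) • d by abel]
    rw [inner_sub_right, real_inner_smul_right]
  have e2 : ⟪g y, z - y⟫ = -(1 / L) * ⟪g y, d⟫ := by
    rw [hz, show y - (1 / L) • d - y = -((1 / L) • d) by abel]
    rw [inner_neg_right, real_inner_smul_right]; ring
  have e3 : ‖z - y‖ ^ 2 = (1 / L) ^ 2 * ‖d‖ ^ 2 := by
    rw [hz, show y - (1 / L) • d - y = -((1 / L) • d) by abel]
    rw [norm_neg, norm_smul, Real.norm_eq_abs, abs_of_pos (one_div_pos.mpr hL), mul_pow]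
  have e4 : ⟪g y, d⟫ - ⟪g x, d⟫ = ‖d‖ ^ 2 := by
    rw [← inner_sub_left, ← hd, real_inner_self_eq_norm_sq]
  have hL' : L ≠ 0 := ne_of_gt hL
  rw [e1] at h1; rw [e2, e3] at h2
  have expand : L / 2 * ((1 / L) ^ 2 * ‖d‖ ^ 2) = 1 / (2 * L) * ‖d‖ ^ 2 := by
    field_simp
  have e5 : (1 / L) * ⟪g y, d⟫ - (1 / L) * ⟪g x, d⟫ = (1 / L) * ‖d‖ ^ 2 := by
    rw [← mul_sub, e4]
  have e6 : (1 / L) * ‖d‖ ^ 2 = 2 * (1 / (2 * L) * ‖d‖ ^ 2) := by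
    field_simp
  linarith

lemma cocoercive (f : E → ℝ) (g : E → E) (hg : ∀ z, HasGradientAt f (g z) z)
    (hc : ConvexOn ℝ Set.univ f)
    {L : ℝ} (hL : 0 < L) (hlip : ∀ x y : E, ‖g x - g y‖ ≤ L * ‖x - y‖) (x y : E) :
    ‖g x - g y‖ ^ 2 ≤ L * ⟪g x - g y, x - y⟫ := by
  have h1 := lower_quad f g hg hc hL hlip x y
  have h2 := lower_quad f g hg hc hL hlip y x
  rw [norm_sub_rev (g x) (g y)] at h2
  rw [norm_sub_rev (g x) (g y)]
  have e2 : ⟪g x - g y, x - y⟫ = ⟪g y, y - x⟫ - ⟪g x, y - x⟫ := by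
    rw [inner_sub_left, show x - y = -(y - x) by abel, inner_neg_right, inner_neg_right]
    ring
  have e1 : ⟪g y, x - y⟫ = -⟪g y, y - x⟫ := by
    rw [show x - y = -(y - x) by abel, inner_neg_right]
  have e6 : (1 / L) * ‖g y - g x‖ ^ 2 = 2 * (1 / (2 * L) * ‖g y - g x‖ ^ 2) := by
    field_simp
  have hS : (1 / L) * ‖g y - g x‖ ^ 2 ≤ ⟪g y, y - x⟫ - ⟪g x, y - x⟫ := by linarith
  have hM := mul_le_mul_of_nonneg_left hS hL.le
  have eL : L * ((1 / L) * ‖g y - g x‖ ^ 2) = ‖g y - g x‖ ^ 2 := by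
    field_simp
  rw [e2]
  linarith

end Aux

theorem minibatch_phi2_decrease
    {d n m : ℕ} (hd : 0 < d) (hn : 0 < n) (hm : 0 < m) (hmn : m ∣ n)
    (L Lf μ : ℝ) (hL : 0 < L) (hLf : 0 < Lf) (hμ : 0 < μ)
    (f : Fin n → EuclideanSpace ℝ (Fin d) → ℝ)
    (gradf : Fin n → EuclideanSpace ℝ (Fin d) → EuclideanSpace ℝ (Fin d))
    (hgrad : ∀ i x, HasGradientAt (f i) (gradf i x) x)
    (hconv : ∀ i, ConvexOn ℝ Set.univ (f i))
    (hsmooth : ∀ i (x y : EuclideanSpace ℝ (Fin d)), ‖gradf i x - gradf i y‖ ≤ L * ‖x - y‖)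
    (hFsmooth : ∀ x y : EuclideanSpace ℝ (Fin d),
      ‖((1 : ℝ) / n) • (∑ i, gradf i x) - ((1 : ℝ) / n) • (∑ i, gradf i y)‖ ≤ Lf * ‖x - y‖)
    (hFstrong : ∀ x y : EuclideanSpace ℝ (Fin d),
      μ * ‖x - y‖ ^ 2 ≤
        ⟪((1 : ℝ) / n) • (∑ i, gradf i x) - ((1 : ℝ) / n) • (∑ i, gradf i y), x - y⟫)
    (xstar : EuclideanSpace ℝ (Fin d))
    (hmin : ∀ x : EuclideanSpace ℝ (Fin d),
      (((1 : ℝ) / n) * ∑ i, f i xstar) ≤ ((1 : ℝ) / n) * ∑ i, f i x)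
    (hstarzero : (∑ i, gradf i xstar) = 0)
    (J : Fin n → Fin m)
    (hpart : ∀ j, (Finset.univ.filter (fun i => J i = j)).card = n / m)
    (η : ℝ) (hη : 0 < η)
    (S : MbState d n)
    :
    (∑ B : Fin m → Fin n, mbWeight J B *
        (4 * η ^ 2 * ∑ i, ‖(MbState.step gradf η S B).alpha i - gradf i xstar‖ ^ 2))
        - 4 * η ^ 2 * (∑ i, ‖S.alpha i - gradf i xstar‖ ^ 2)
      ≤ -(1 - Real.exp (-((m : ℝ) / n))) *
            (4 * η ^ 2 * ∑ i, ‖S.alpha i - gradf i xstar‖ ^ 2)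
        + 4 * (m : ℝ) * η ^ 2 * L *
            ⟪S.x - xstar, ((1 : ℝ) / n) • ∑ i, gradf i S.x⟫ := by
  classical
  have hn' : (0:ℝ) < n := by exact_mod_cast hn
  have hm' : (0:ℝ) < m := by exact_mod_cast hm
  set p : ℝ := (m : ℝ) / n with hp
  have hp0 : 0 ≤ p := by positivity
  set w : Fin m → Fin n → ℝ := fun j b => if J b = j then p else 0 with hw
  have hmb : ∀ B : Fin m → Fin n, mbWeight J B = ∏ j, w j (B j) := fun B => rfl
  -- each row of weights sums to 1
  have hwsum : ∀ j, (∑ b, w j b) = 1 := by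
    intro j
    have h1 : (∑ b, w j b) = ∑ b ∈ Finset.univ.filter (fun b => J b = j), p := by
      rw [Finset.sum_filter]
    rw [h1, Finset.sum_const, nsmul_eq_mul, hpart j, hp,
      Nat.cast_div hmn (by exact_mod_cast hm'.ne')]
    field_simp
  -- total weight is 1
  have key1 : (∑ B : Fin m → Fin n, ∏ j, w j (B j)) = 1 := by
    rw [← Fintype.prod_sum]
    simp [hwsum]
  -- marginal probability of replacement
  have key2 : ∀ i : Fin n,
      (∑ B : Fin m → Fin n, (∏ j, w j (B j)) * (if B (J i) = i then (1:ℝ) else 0)) = p := by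
    intro i
    set w' : Fin m → Fin n → ℝ :=
      fun j b => if j = J i then (if b = i then w j b else 0) else w j b with hw'
    have hrw : ∀ B : Fin m → Fin n,
        (∏ j, w j (B j)) * (if B (J i) = i then (1:ℝ) else 0) = ∏ j, w' j (B j) := by
      intro B
      by_cases hBi : B (J i) = i
      · rw [if_pos hBi, mul_one]
        apply Finset.prod_congr rfl
        intro j _
        by_cases hj : j = J i
        · subst hj; simp [hw', hBi]
        · simp [hw', hj]
      · rw [if_neg hBi, mul_zero]
        symm
        apply Finset.prod_eq_zero (Finset.mem_univ (J i))
        simp [hw', hBi]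
    rw [Finset.sum_congr rfl (fun B _ => hrw B), ← Fintype.prod_sum]
    have hja : (∑ b, w' (J i) b) = p := by
      have : (∑ b, w' (J i) b) = ∑ b, if b = i then w (J i) b else 0 := by
        apply Finset.sum_congr rfl; intro b _; simp [hw']
      rw [this, Finset.sum_ite_eq' Finset.univ i (fun b => w (J i) b)]
      simp [hw]
    have hjo : ∀ j, j ≠ J i → (∑ b, w' j b) = 1 := by
      intro j hj
      have : (∑ b, w' j b) = ∑ b, w j b := by
        apply Finset.sum_congr rfl; intro b _; simp [hw', hj]
      rw [this, hwsum]
    calc (∏ j, ∑ b, w' j b) = ∑ b, w' (J i) b := Fintype.prod_eq_single (J i) hjo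
      _ = p := hja
  -- rewrite each summand
  have key3 : ∀ (i : Fin n) (B : Fin m → Fin n),
      mbWeight J B * ‖(MbState.step gradf η S B).alpha i - gradf i xstar‖ ^ 2
        = (∏ j, w j (B j)) *
            (‖S.alpha i - gradf i xstar‖ ^ 2 +
              (if B (J i) = i then
                ‖gradf i S.x - gradf i xstar‖ ^ 2 - ‖S.alpha i - gradf i xstar‖ ^ 2 else 0)) := by
    intro i B
    rw [hmb]
    by_cases h0 : (∏ j, w j (B j)) = 0
    · rw [h0, zero_mul, zero_mul]
    · have hJ : ∀ j, J (B j) = j := by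
        intro j
        by_contra hj
        exact h0 (Finset.prod_eq_zero (Finset.mem_univ j) (by simp [hw, hj]))
      congr 1
      show ‖(if ∃ j, B j = i then gradf i S.x else S.alpha i) - gradf i xstar‖ ^ 2 = _
      by_cases hBi : B (J i) = i
      · rw [if_pos ⟨J i, hBi⟩, if_pos hBi]; ring
      · have hex : ¬∃ j, B j = i := by
          rintro ⟨j, hji⟩
          exact hBi (by rw [← hji, hJ j, hji])
        rw [if_neg hex, if_neg hBi, add_zero]
  -- the expectation computation
  have main : (∑ B : Fin m → Fin n, mbWeight J B *
        (4 * η ^ 2 * ∑ i, ‖(MbState.step gradf η S B).alpha i - gradf i xstar‖ ^ 2))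
      = 4 * η ^ 2 * ∑ i, (‖S.alpha i - gradf i xstar‖ ^ 2 +
          p * (‖gradf i S.x - gradf i xstar‖ ^ 2 - ‖S.alpha i - gradf i xstar‖ ^ 2)) := by
    have step1 : ∀ B : Fin m → Fin n, mbWeight J B *
        (4 * η ^ 2 * ∑ i, ‖(MbState.step gradf η S B).alpha i - gradf i xstar‖ ^ 2)
        = 4 * η ^ 2 * ∑ i, mbWeight J B *
            ‖(MbState.step gradf η S B).alpha i - gradf i xstar‖ ^ 2 := by
      intro B
      rw [Finset.mul_sum]
      rw [Finset.mul_sum]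
      rw [Finset.mul_sum]
      apply Finset.sum_congr rfl
      intro i _
      ring
    rw [Finset.sum_congr rfl (fun B _ => step1 B), ← Finset.mul_sum, Finset.sum_comm]
    congr 1
    apply Finset.sum_congr rfl
    intro i _
    rw [Finset.sum_congr rfl (fun B _ => key3 i B)]
    have expand : ∀ B : Fin m → Fin n,
        (∏ j, w j (B j)) *
            (‖S.alpha i - gradf i xstar‖ ^ 2 +
              (if B (J i) = i then
                ‖gradf i S.x - gradf i xstar‖ ^ 2 - ‖S.alpha i - gradf i xstar‖ ^ 2 else 0))
        = (∏ j, w j (B j)) * ‖S.alpha i - gradf i xstar‖ ^ 2 +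
          (‖gradf i S.x - gradf i xstar‖ ^ 2 - ‖S.alpha i - gradf i xstar‖ ^ 2) *
            ((∏ j, w j (B j)) * (if B (J i) = i then (1:ℝ) else 0)) := by
      intro B
      by_cases hBi : B (J i) = i
      · rw [if_pos hBi, if_pos hBi]; ring
      · rw [if_neg hBi, if_neg hBi]; ring
    rw [Finset.sum_congr rfl (fun B _ => expand B), Finset.sum_add_distrib,
      ← Finset.sum_mul, key1, ← Finset.mul_sum, key2 i]
    ring
  rw [main]
  -- cocoercivity bound
  have hAle : (∑ i, ‖gradf i S.x - gradf i xstar‖ ^ 2)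
      ≤ L * ⟪S.x - xstar, ∑ i, gradf i S.x⟫ := by
    have h1 : ∀ i : Fin n, ‖gradf i S.x - gradf i xstar‖ ^ 2
        ≤ L * ⟪gradf i S.x - gradf i xstar, S.x - xstar⟫ := fun i =>
      cocoercive (f i) (gradf i) (hgrad i) (hconv i) hL (hsmooth i) S.x xstar
    calc (∑ i, ‖gradf i S.x - gradf i xstar‖ ^ 2)
        ≤ ∑ i, L * ⟪gradf i S.x - gradf i xstar, S.x - xstar⟫ :=
          Finset.sum_le_sum (fun i _ => h1 i)
      _ = L * ⟪∑ i, (gradf i S.x - gradf i xstar), S.x - xstar⟫ := by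
          rw [← Finset.mul_sum, sum_inner]
      _ = L * ⟪∑ i, gradf i S.x, S.x - xstar⟫ := by
          rw [Finset.sum_sub_distrib, hstarzero, sub_zero]
      _ = L * ⟪S.x - xstar, ∑ i, gradf i S.x⟫ := by rw [real_inner_comm]
  have hexp : 1 - Real.exp (-p) ≤ p := by
    have := Real.add_one_le_exp (-p)
    linarith
  have hCnn : (0:ℝ) ≤ ∑ i, ‖S.alpha i - gradf i xstar‖ ^ 2 :=
    Finset.sum_nonneg (fun i _ => sq_nonneg _)
  have hinner : ⟪S.x - xstar, ((1 : ℝ) / n) • ∑ i, gradf i S.x⟫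
      = (1 / (n:ℝ)) * ⟪S.x - xstar, ∑ i, gradf i S.x⟫ := real_inner_smul_right _ _ _
  rw [hinner]
  have hsplit : (∑ i, (‖S.alpha i - gradf i xstar‖ ^ 2 +
        p * (‖gradf i S.x - gradf i xstar‖ ^ 2 - ‖S.alpha i - gradf i xstar‖ ^ 2)))
      = (∑ i, ‖S.alpha i - gradf i xstar‖ ^ 2)
        + p * ((∑ i, ‖gradf i S.x - gradf i xstar‖ ^ 2)
          - (∑ i, ‖S.alpha i - gradf i xstar‖ ^ 2)) := by
    rw [Finset.sum_add_distrib, ← Finset.mul_sum, Finset.sum_sub_distrib]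
  rw [hsplit]
  have t1 : 4 * η ^ 2 * p * (∑ i, ‖gradf i S.x - gradf i xstar‖ ^ 2)
      ≤ 4 * η ^ 2 * p * (L * ⟪S.x - xstar, ∑ i, gradf i S.x⟫) :=
    mul_le_mul_of_nonneg_left hAle (by positivity)
  have t2 : 4 * η ^ 2 * ((1 - Real.exp (-p)) * (∑ i, ‖S.alpha i - gradf i xstar‖ ^ 2))
      ≤ 4 * η ^ 2 * (p * (∑ i, ‖S.alpha i - gradf i xstar‖ ^ 2)) :=
    mul_le_mul_of_nonneg_left (mul_le_mul_of_nonneg_right hexp hCnn) (by positivity)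
  have hpm : 4 * (m:ℝ) * η ^ 2 * L * ((1 / (n:ℝ)) * ⟪S.x - xstar, ∑ i, gradf i S.x⟫)
      = 4 * η ^ 2 * p * (L * ⟪S.x - xstar, ∑ i, gradf i S.x⟫) := by
    rw [hp]; ring
  rw [hpm]
  nlinarith [t1, t2]
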